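/- arXiv:1312.2770 — 3 statements merged into one kernel-verified Lean document; each statement's English description precedes it below -/
import Mathlib

section
/- Let E be a Banach lattice. Every order interval [-x, x] (for x in the positive cone of E) is a limited subset of E if and only if the lattice operations of E* are weak* sequentially continuous, i.e., whenever a sequence (f_n) in E* is weak* null, the sequence (|f_n|) is weak* null. -/
open Filter Topology Metric Pointwise

/-- The value `|f| x` of the modulus of a continuous linear functional at a positive
element `x`, given by the Riesz–Kantorovich formula `|f| x = sup { f u : |u| ≤ x }`. -/
noncomputable def absFunctional {E : Type*} [NormedAddCommGroup E] [Lattice E] [HasSolidNorm E]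
    [IsOrderedAddMonoid E] [NormedSpace ℝ E]
    (f : E →L[ℝ] ℝ) (x : E) : ℝ :=
  sSup ((fun u => f u) '' {u : E | |u| ≤ x})

/-- Two functionals `f, g` on a Banach lattice are (lattice) disjoint: `|f| ⊓ |g| = 0`,
expressed via the Riesz–Kantorovich formula for the infimum of the positive functionals
`|f|` and `|g|`. -/
def DualDisjoint {E : Type*} [NormedAddCommGroup E] [Lattice E] [HasSolidNorm E]
    [IsOrderedAddMonoid E] [NormedSpace ℝ E]
    (f g : E →L[ℝ] ℝ) : Prop :=
  ∀ x : E, 0 ≤ x → ∀ ε : ℝ, 0 < ε →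
    ∃ y : E, 0 ≤ y ∧ y ≤ x ∧ absFunctional f y + absFunctional g (x - y) < ε

/-- A sequence of functionals is disjoint if any two distinct terms are lattice disjoint. -/
def DualDisjointSeq {E : Type*} [NormedAddCommGroup E] [Lattice E] [HasSolidNorm E]
    [IsOrderedAddMonoid E] [NormedSpace ℝ E]
    (f : ℕ → E →L[ℝ] ℝ) : Prop :=
  ∀ m k, m ≠ k → DualDisjoint (f m) (f k)

/-- A sequence of functionals is weak* null if it converges to `0` pointwise. -/
def WeakStarNull {E : Type*} [NormedAddCommGroup E] [NormedSpace ℝ E]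
    (f : ℕ → E →L[ℝ] ℝ) : Prop :=
  ∀ x : E, Tendsto (fun n => f n x) atTop (𝓝 (0 : ℝ))

/-- The sequence `(|f n|)` of moduli is weak* null (it suffices to test on positive
elements since `|f n|` is additive and every element is a difference of positives). -/
def AbsWeakStarNull {E : Type*} [NormedAddCommGroup E] [Lattice E] [HasSolidNorm E]
    [IsOrderedAddMonoid E] [NormedSpace ℝ E]
    (f : ℕ → E →L[ℝ] ℝ) : Prop :=
  ∀ x : E, 0 ≤ x → Tendsto (fun n => absFunctional (f n) x) atTop (𝓝 (0 : ℝ))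

/-- A functional is positive if it is nonnegative on the positive cone. -/
def PositiveFunctional {E : Type*} [NormedAddCommGroup E] [Lattice E] [HasSolidNorm E]
    [IsOrderedAddMonoid E] [NormedSpace ℝ E]
    (f : E →L[ℝ] ℝ) : Prop :=
  ∀ x : E, 0 ≤ x → 0 ≤ f x

/-- A norm bounded set `A` is almost limited if every disjoint weak* null sequence of
functionals converges to `0` uniformly on `A`. -/
def AlmostLimitedSet {E : Type*} [NormedAddCommGroup E] [Lattice E] [HasSolidNorm E]
    [IsOrderedAddMonoid E] [NormedSpace ℝ E]
    (A : Set E) : Prop :=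
  Bornology.IsBounded A ∧
    ∀ f : ℕ → E →L[ℝ] ℝ, DualDisjointSeq f → WeakStarNull f →
      TendstoUniformlyOn (fun n x => f n x) (fun _ => (0 : ℝ)) atTop A

/-- A norm bounded set `A` in a Banach space is limited if every weak* null sequence of
functionals converges to `0` uniformly on `A`. -/
def LimitedSet {X : Type*} [NormedAddCommGroup X] [NormedSpace ℝ X] (A : Set X) : Prop :=
  Bornology.IsBounded A ∧
    ∀ f : ℕ → X →L[ℝ] ℝ, WeakStarNull f →
      TendstoUniformlyOn (fun n x => f n x) (fun _ => (0 : ℝ)) atTop A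

/-- Property (d): for every disjoint weak* null sequence `(f n)`, `(|f n|)` is weak* null. -/
def PropertyD (E : Type*) [NormedAddCommGroup E] [Lattice E] [HasSolidNorm E]
    [IsOrderedAddMonoid E] [NormedSpace ℝ E] : Prop :=
  ∀ f : ℕ → E →L[ℝ] ℝ, DualDisjointSeq f → WeakStarNull f → AbsWeakStarNull f

/-- The lattice operations of the dual are weak* sequentially continuous: for every
weak* null sequence `(f n)`, `(|f n|)` is weak* null. -/
def DualLatticeWeakStarSeqCont (E : Type*) [NormedAddCommGroup E] [Lattice E] [HasSolidNorm E]
    [IsOrderedAddMonoid E]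
    [NormedSpace ℝ E] : Prop :=
  ∀ f : ℕ → E →L[ℝ] ℝ, WeakStarNull f → AbsWeakStarNull f

/-- A sequence in a Banach lattice is disjoint if the moduli of distinct terms meet at 0. -/
def LatticeDisjointSeq {E : Type*} [NormedAddCommGroup E] [Lattice E] [HasSolidNorm E]
    [IsOrderedAddMonoid E] (x : ℕ → E) : Prop :=
  ∀ m k, m ≠ k → |x m| ⊓ |x k| = 0

/-- A sequence is weakly null if `f (x n) → 0` for every continuous linear functional. -/
def WeaklyNull {E : Type*} [NormedAddCommGroup E] [NormedSpace ℝ E] (x : ℕ → E) : Prop :=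
  ∀ f : E →L[ℝ] ℝ, Tendsto (fun n => f (x n)) atTop (𝓝 (0 : ℝ))

/-- A set is solid if `x ∈ A` and `|y| ≤ |x|` imply `y ∈ A`. -/
def IsSolid {E : Type*} [NormedAddCommGroup E] [Lattice E] [HasSolidNorm E]
    [IsOrderedAddMonoid E] (A : Set E) : Prop :=
  ∀ x ∈ A, ∀ y : E, |y| ≤ |x| → y ∈ A

/-- The solid hull of a set. -/
def solidHull {E : Type*} [NormedAddCommGroup E] [Lattice E] [HasSolidNorm E]
    [IsOrderedAddMonoid E] (A : Set E) : Set E :=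
  {y | ∃ x ∈ A, |y| ≤ |x|}

/-- A set is almost order bounded if for every `ε > 0` it is contained in
`[-u, u] + ε B_E` for some positive `u`. -/
def AlmostOrderBounded {E : Type*} [NormedAddCommGroup E] [Lattice E] [HasSolidNorm E]
    [IsOrderedAddMonoid E] (A : Set E) : Prop :=
  ∀ ε : ℝ, 0 < ε → ∃ u : E, 0 ≤ u ∧ A ⊆ Set.Icc (-u) u + Metric.closedBall (0 : E) ε

/-- σ-Dedekind completeness: every countable nonempty set bounded above has a supremum. -/
def SigmaDedekindComplete (E : Type*) [NormedAddCommGroup E] [Lattice E] [HasSolidNorm E]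
    [IsOrderedAddMonoid E] : Prop :=
  ∀ s : Set E, s.Countable → s.Nonempty → BddAbove s → ∃ b : E, IsLUB s b

/-- A set is relatively weakly compact if its closure in the weak topology is compact. -/
def RelativelyWeaklyCompact {E : Type*} [NormedAddCommGroup E] [NormedSpace ℝ E]
    (A : Set E) : Prop :=
  IsCompact (closure ((toWeakSpace ℝ E) '' A))

/-- The weak Dunford–Pettis* property: every relatively weakly compact set is almost limited. -/
def WDPStar (E : Type*) [NormedAddCommGroup E] [Lattice E] [HasSolidNorm E]
    [IsOrderedAddMonoid E] [NormedSpace ℝ E] : Prop :=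
  ∀ A : Set E, RelativelyWeaklyCompact A → AlmostLimitedSet A

/-- The bi-sequence property: for each disjoint weakly null sequence in the positive cone
and each weak* null sequence of positive functionals, `f n (x n) → 0`. -/
def BiSequenceProperty (E : Type*) [NormedAddCommGroup E] [Lattice E] [HasSolidNorm E]
    [IsOrderedAddMonoid E] [NormedSpace ℝ E] : Prop :=
  ∀ x : ℕ → E, (∀ n, 0 ≤ x n) → LatticeDisjointSeq x → WeaklyNull x →
    ∀ f : ℕ → E →L[ℝ] ℝ, (∀ n, PositiveFunctional (f n)) → WeakStarNull f →
      Tendsto (fun n => f n (x n)) atTop (𝓝 (0 : ℝ))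

/-- The dual Schur property: every disjoint weak* null sequence of functionals is norm null. -/
def DualSchur (E : Type*) [NormedAddCommGroup E] [Lattice E] [HasSolidNorm E]
    [IsOrderedAddMonoid E] [NormedSpace ℝ E] : Prop :=
  ∀ f : ℕ → E →L[ℝ] ℝ, DualDisjointSeq f → WeakStarNull f →
    Tendsto (fun n => ‖f n‖) atTop (𝓝 (0 : ℝ))

/-- The dual positive Schur property: every weak* null sequence of positive functionals
is norm null. -/
def DualPositiveSchur (E : Type*) [NormedAddCommGroup E] [Lattice E] [HasSolidNorm E]
    [IsOrderedAddMonoid E] [NormedSpace ℝ E] : Prop :=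
  ∀ f : ℕ → E →L[ℝ] ℝ, (∀ n, PositiveFunctional (f n)) → WeakStarNull f →
    Tendsto (fun n => ‖f n‖) atTop (𝓝 (0 : ℝ))

/-- The norm of a Banach lattice is order continuous: every net decreasing to `0`
converges to `0` in norm. -/
def OrderContinuousNorm (E : Type*) [NormedAddCommGroup E] [Lattice E] [HasSolidNorm E]
    [IsOrderedAddMonoid E] : Prop :=
  ∀ {ι : Type*} [Preorder ι] [IsDirected ι (· ≤ ·)] [Nonempty ι] (x : ι → E),
    Antitone x → IsGLB (Set.range x) 0 → Tendsto (fun i => ‖x i‖) atTop (𝓝 (0 : ℝ))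

/-- The norm of the dual Banach lattice is order continuous: every net of functionals
decreasing to `0` (in the dual order, i.e., pointwise on the positive cone, with greatest
lower bound `0`) converges to `0` in norm. -/
def DualOrderContinuousNorm (E : Type*) [NormedAddCommGroup E] [Lattice E] [HasSolidNorm E]
    [IsOrderedAddMonoid E]
    [NormedSpace ℝ E] : Prop :=
  ∀ {ι : Type*} [Preorder ι] [IsDirected ι (· ≤ ·)] [Nonempty ι] (f : ι → E →L[ℝ] ℝ),
    (∀ i j, i ≤ j → ∀ x : E, 0 ≤ x → f j x ≤ f i x) →
    (∀ i, PositiveFunctional (f i)) →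
    (∀ g : E →L[ℝ] ℝ, (∀ i, ∀ x : E, 0 ≤ x → g x ≤ f i x) → ∀ x : E, 0 ≤ x → g x ≤ 0) →
    Tendsto (fun i => ‖f i‖) atTop (𝓝 (0 : ℝ))

/-- A norm bounded set `A` is L-weakly compact if every disjoint sequence in its solid
hull is norm null. -/
def LWeaklyCompactSet {E : Type*} [NormedAddCommGroup E] [Lattice E] [HasSolidNorm E]
    [IsOrderedAddMonoid E] (A : Set E) : Prop :=
  Bornology.IsBounded A ∧
    ∀ y : ℕ → E, (∀ n, y n ∈ solidHull A) → LatticeDisjointSeq y →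
      Tendsto (fun n => ‖y n‖) atTop (𝓝 (0 : ℝ))

/-- An atom of a Banach lattice. -/
def IsLatticeAtom {E : Type*} [NormedAddCommGroup E] [Lattice E] [HasSolidNorm E]
    [IsOrderedAddMonoid E] (a : E) : Prop :=
  0 < a ∧ ∀ x y : E, 0 ≤ x → x ≤ a → 0 ≤ y → y ≤ a → x ⊓ y = 0 → x = 0 ∨ y = 0

/-- A Banach lattice is discrete (atomic) if the band generated by its atoms is the whole
lattice; equivalently, the only element disjoint from all atoms is `0`. -/
def DiscreteBanachLattice (E : Type*) [NormedAddCommGroup E] [Lattice E] [HasSolidNorm E]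
    [IsOrderedAddMonoid E] : Prop :=
  ∀ x : E, (∀ a : E, IsLatticeAtom a → |x| ⊓ a = 0) → x = 0

/-- A linear operator between Banach lattices is order bounded if it maps order intervals
into order intervals. -/
def OrderBoundedOperator {E F : Type*} [NormedAddCommGroup E] [Lattice E] [HasSolidNorm E]
    [IsOrderedAddMonoid E] [NormedSpace ℝ E]
    [NormedAddCommGroup F] [Lattice F] [HasSolidNorm F]
    [IsOrderedAddMonoid F] [NormedSpace ℝ F] (T : E →ₗ[ℝ] F) : Prop :=
  ∀ a b : E, ∃ c d : F, T '' Set.Icc a b ⊆ Set.Icc c d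

/-- Every order interval `[-x, x]` (for `x ≥ 0`) of a Banach lattice `E` is
limited if and only if the lattice operations of `E*` are weak* sequentially continuous. -/
theorem statement1 {E : Type*} [NormedAddCommGroup E] [Lattice E] [HasSolidNorm E]
    [IsOrderedAddMonoid E] [NormedSpace ℝ E]
    [CompleteSpace E] :
    (∀ x : E, 0 ≤ x → LimitedSet (Set.Icc (-x) x)) ↔ DualLatticeWeakStarSeqCont E := by
  constructor
  · intro h f hf x hx
    obtain ⟨-, hlim⟩ := h x hx
    have hu := (Metric.tendstoUniformlyOn_iff.mp (hlim f hf))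
    rw [Metric.tendsto_atTop]
    intro ε hε
    obtain ⟨N, hN⟩ := Filter.eventually_atTop.mp (hu (ε / 2) (by linarith))
    refine ⟨N, fun n hn => ?_⟩
    have key : ∀ u ∈ {u : E | |u| ≤ x}, f n u ≤ ε / 2 := by
      intro u hu'
      have humem : u ∈ Set.Icc (-x) x := by
        have := abs_le'.mp hu'
        exact Set.mem_Icc.mpr ⟨neg_le.mp this.2, this.1⟩
      have := hN n hn u humem
      rw [dist_comm, dist_zero_right] at this
      exact (le_abs_self _).trans this.le
    have hmem0 : (0 : ℝ) ∈ (fun u => f n u) '' {u : E | |u| ≤ x} := by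
      refine ⟨0, by simpa using hx, by simp⟩
    have hbdd : BddAbove ((fun u => f n u) '' {u : E | |u| ≤ x}) := by
      refine ⟨ε / 2, ?_⟩
      rintro y ⟨u, hu', rfl⟩
      exact key u hu'
    have h1 : absFunctional (f n) x ≤ ε / 2 := by
      apply Real.sSup_le
      · rintro y ⟨u, hu', rfl⟩; exact key u hu'
      · linarith
    have h2 : (0 : ℝ) ≤ absFunctional (f n) x := le_csSup hbdd hmem0
    rw [Real.dist_eq, sub_zero, abs_of_nonneg h2]
    linarith
  · intro h x hx
    constructor
    · refine (Metric.isBounded_closedBall (x := (0 : E)) (r := ‖x‖)).subset ?_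
      intro u hu
      rw [Metric.mem_closedBall, dist_zero_right]
      refine HasSolidNorm.solid ?_
      rw [abs_of_nonneg hx]
      exact abs_le'.mpr ⟨hu.2, neg_le.mpr hu.1⟩
    · intro f hf
      have habs := h f hf x hx
      rw [Metric.tendstoUniformlyOn_iff]
      intro ε hε
      rw [Metric.tendsto_atTop] at habs
      obtain ⟨N, hN⟩ := habs ε hε
      rw [eventually_atTop]
      refine ⟨N, fun n hn u hu => ?_⟩
      have hfmem : |u| ≤ x := abs_le'.mpr ⟨hu.2, neg_le.mpr hu.1⟩
      have hbdd : BddAbove ((fun v => f n v) '' {v : E | |v| ≤ x}) := by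
        refine ⟨‖f n‖ * ‖x‖, ?_⟩
        rintro y ⟨v, hv, rfl⟩
        calc f n v ≤ |f n v| := le_abs_self _
          _ ≤ ‖f n‖ * ‖v‖ := by simpa using (f n).le_opNorm v
          _ ≤ ‖f n‖ * ‖x‖ := by
              apply mul_le_mul_of_nonneg_left _ (norm_nonneg _)
              refine HasSolidNorm.solid ?_
              rwa [abs_of_nonneg hx]
      have h1 : f n u ≤ absFunctional (f n) x :=
        le_csSup hbdd ⟨u, hfmem, rfl⟩
      have h2 : -(f n u) ≤ absFunctional (f n) x := by
        have : (-u) ∈ {v : E | |v| ≤ x} := by simpa [abs_neg] using hfmem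
        have := le_csSup hbdd ⟨-u, this, rfl⟩
        simpa [absFunctional] using this
      have := hN n hn
      rw [Real.dist_eq, sub_zero] at this
      rw [dist_comm, dist_zero_right, Real.norm_eq_abs]
      calc |f n u| ≤ absFunctional (f n) x := abs_le'.mpr ⟨h1, h2⟩
        _ ≤ |absFunctional (f n) x| := le_abs_self _
        _ < ε := this
end

section
/- For a Banach lattice E, the lattice operations of E* are weak* sequentially continuous if and only if every almost order bounded subset of E is limited. -/
open Filter Topology Metric Pointwise

section AuxLemmas

variable {E : Type*} [NormedAddCommGroup E] [Lattice E] [HasSolidNorm E] [IsOrderedAddMonoid E] [NormedSpace ℝ E]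

lemma norm_le_of_abs_le' {v u : E} (hu : 0 ≤ u) (h : |v| ≤ u) : ‖v‖ ≤ ‖u‖ :=
  HasSolidNorm.solid (by rwa [abs_of_nonneg hu])

lemma absFunctional_bddAbove (f : E →L[ℝ] ℝ) {u : E} (hu : 0 ≤ u) :
    BddAbove ((fun v => f v) '' {v : E | |v| ≤ u}) := by
  refine ⟨‖f‖ * ‖u‖, ?_⟩
  rintro _ ⟨v, hv, rfl⟩
  calc f v ≤ |f v| := le_abs_self _
    _ ≤ ‖f‖ * ‖v‖ := f.le_opNorm v
    _ ≤ ‖f‖ * ‖u‖ := by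
        have := norm_le_of_abs_le' hu hv
        gcongr

lemma absFunctional_nonneg (f : E →L[ℝ] ℝ) {u : E} (hu : 0 ≤ u) :
    0 ≤ absFunctional f u := by
  apply le_csSup (absFunctional_bddAbove f hu)
  exact ⟨0, by simpa using hu, by simp⟩

lemma abs_apply_le_absFunctional (f : E →L[ℝ] ℝ) {u v : E} (hu : 0 ≤ u) (hv : |v| ≤ u) :
    |f v| ≤ absFunctional f u := by
  have h1 : f v ≤ absFunctional f u :=
    le_csSup (absFunctional_bddAbove f hu) ⟨v, hv, rfl⟩
  have h2 : -(f v) ≤ absFunctional f u := by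
    have : f (-v) ≤ absFunctional f u :=
      le_csSup (absFunctional_bddAbove f hu) ⟨-v, by simpa using hv, rfl⟩
    simpa using this
  exact abs_le'.2 ⟨h1, h2⟩

end AuxLemmas

/-- The lattice operations of `E*` are weak* sequentially continuous iff
every almost order bounded subset of `E` is limited. -/
theorem statement4 {E : Type*} [NormedAddCommGroup E] [Lattice E] [HasSolidNorm E] [IsOrderedAddMonoid E] [NormedSpace ℝ E]
    [CompleteSpace E] :
    DualLatticeWeakStarSeqCont E ↔ ∀ A : Set E, AlmostOrderBounded A → LimitedSet A := by
  constructor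
  · -- Forward direction
    intro h A hA
    constructor
    · -- boundedness
      obtain ⟨u, hu, hsub⟩ := hA 1 one_pos
      refine (Metric.isBounded_closedBall (x := (0 : E)) (r := ‖u‖ + 1)).subset ?_
      intro x hx
      obtain ⟨y, hy, z, hz, rfl⟩ := Set.mem_add.1 (hsub hx)
      rw [Metric.mem_closedBall, dist_zero_right]
      have hz' : ‖z‖ ≤ 1 := by rwa [Metric.mem_closedBall, dist_zero_right] at hz
      calc ‖y + z‖ ≤ ‖y‖ + ‖z‖ := norm_add_le _ _
        _ ≤ ‖u‖ + 1 :=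
            add_le_add (norm_le_of_abs_le' hu (abs_le'.2 ⟨hy.2, neg_le.2 hy.1⟩)) hz'
    · intro f hf
      rw [Metric.tendstoUniformlyOn_iff]
      intro ε hε
      -- uniform bound via Banach–Steinhaus
      obtain ⟨M, hM⟩ := banach_steinhaus (g := f) (fun x => by
        have : BddAbove (Set.range fun n => ‖f n x‖) :=
          ((hf x).norm).bddAbove_range
        obtain ⟨C, hC⟩ := this
        exact ⟨C, fun i => hC ⟨i, rfl⟩⟩)
      have hM0 : 0 ≤ M := le_trans (norm_nonneg (f 0)) (hM 0)
      set δ := ε / (2 * (M + 1)) with hδdef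
      have hδ : 0 < δ := by positivity
      obtain ⟨u, hu, hsub⟩ := hA δ hδ
      have habs : Tendsto (fun n => absFunctional (f n) u) atTop (𝓝 0) := h f hf u hu
      have hev : ∀ᶠ n in atTop, absFunctional (f n) u < ε / 2 :=
        habs.eventually_lt_const (by linarith)
      filter_upwards [hev] with n hn x hx
      obtain ⟨y, hy, z, hz, rfl⟩ := Set.mem_add.1 (hsub hx)
      have hz' : ‖z‖ ≤ δ := by rwa [Metric.mem_closedBall, dist_zero_right] at hz
      have h1 : |f n y| ≤ absFunctional (f n) u :=
        abs_apply_le_absFunctional (f n) hu (abs_le'.2 ⟨hy.2, neg_le.2 hy.1⟩)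
      have h2 : |f n z| ≤ M * δ := by
        calc |f n z| ≤ ‖f n‖ * ‖z‖ := (f n).le_opNorm z
          _ ≤ M * δ := mul_le_mul (hM n) hz' (norm_nonneg z) hM0
      have hMδ : M * δ ≤ ε / 2 := by
        have : (M + 1) * δ = ε / 2 := by
          rw [hδdef]
          field_simp
        nlinarith
      rw [dist_comm, Real.dist_eq, sub_zero, map_add]
      calc |f n y + f n z| ≤ |f n y| + |f n z| := abs_add_le _ _
        _ < ε / 2 + ε / 2 := by
            have := lt_of_le_of_lt h1 hn
            linarith [le_trans h2 hMδ]
        _ = ε := by ring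
  · -- Reverse direction
    intro h f hf x hx
    have hAOB : AlmostOrderBounded (Set.Icc (-x) x) := by
      intro ε hε
      refine ⟨x, hx, fun y hy => ?_⟩
      have : y + 0 ∈ Set.Icc (-x) x + Metric.closedBall (0 : E) ε :=
        Set.add_mem_add hy (by simp [hε.le])
      simpa using this
    obtain ⟨-, hunif⟩ := h _ hAOB
    have hU := hunif f hf
    rw [Metric.tendstoUniformlyOn_iff] at hU
    rw [Metric.tendsto_atTop]
    intro ε hε
    obtain ⟨N, hN⟩ := eventually_atTop.1 (hU (ε / 2) (half_pos hε))
    refine ⟨N, fun n hn => ?_⟩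
    have hle : absFunctional (f n) x ≤ ε / 2 := by
      apply Real.sSup_le
      · rintro _ ⟨v, hv, rfl⟩
        have hmem : v ∈ Set.Icc (-x) x := by
          rcases abs_le'.1 hv with ⟨h1, h2⟩
          exact ⟨neg_le.1 h2, h1⟩
        have := hN n hn v hmem
        rw [Real.dist_eq, zero_sub, abs_neg] at this
        exact le_trans (le_abs_self _) this.le
      · positivity
    have h0 : 0 ≤ absFunctional (f n) x := absFunctional_nonneg (f n) hx
    rw [Real.dist_eq, sub_zero, abs_of_nonneg h0]
    linarith
end

section
/- For a Banach lattice E, E has the property (d) if and only if every almost order bounded subset of E is almost limited. -/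
open Filter Topology Metric Pointwise

section AuxHelpers

variable {E : Type*} [NormedAddCommGroup E] [Lattice E] [HasSolidNorm E] [IsOrderedAddMonoid E] [NormedSpace ℝ E]

lemma aux_abs_le_of_mem_Icc {u x : E} (h1 : -x ≤ u) (h2 : u ≤ x) : |u| ≤ x := by
  rw [abs]
  exact sup_le h2 (neg_le.mpr h1)

lemma aux_mem_Icc_of_abs_le {u x : E} (h : |u| ≤ x) : -x ≤ u ∧ u ≤ x :=
  ⟨neg_le.mp ((neg_le_abs u).trans h), (le_abs_self u).trans h⟩

lemma aux_bddAbove (f : E →L[ℝ] ℝ) (x : E) (hx : 0 ≤ x) :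
    BddAbove ((fun u => f u) '' {u : E | |u| ≤ x}) := by
  refine ⟨‖f‖ * ‖x‖, ?_⟩
  rintro v ⟨u, hu, rfl⟩
  calc f u ≤ |f u| := le_abs_self _
    _ = ‖f u‖ := rfl
    _ ≤ ‖f‖ * ‖u‖ := f.le_opNorm u
    _ ≤ ‖f‖ * ‖x‖ := by
        have : ‖u‖ ≤ ‖x‖ :=
          HasSolidNorm.solid (hu.trans_eq (abs_of_nonneg hx).symm)
        exact mul_le_mul_of_nonneg_left this (norm_nonneg f)

lemma aux_abs_apply_le (f : E →L[ℝ] ℝ) {y u : E} (h : |y| ≤ u) :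
    |f y| ≤ absFunctional f u := by
  have hu : 0 ≤ u := (abs_nonneg y).trans h
  have hb := aux_bddAbove f u hu
  have h1 : f y ≤ absFunctional f u := le_csSup hb ⟨y, h, rfl⟩
  have h2 : f (-y) ≤ absFunctional f u := le_csSup hb ⟨-y, by simp only [Set.mem_setOf_eq, abs_neg]; exact h, rfl⟩
  rw [map_neg] at h2
  exact abs_le.mpr ⟨by linarith, h1⟩

end AuxHelpers

/-- `E` has property (d) iff every almost order bounded subset of `E` is
almost limited. -/
theorem statement5 {E : Type*} [NormedAddCommGroup E] [Lattice E] [HasSolidNorm E] [IsOrderedAddMonoid E] [NormedSpace ℝ E]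
    [CompleteSpace E] :
    PropertyD E ↔ ∀ A : Set E, AlmostOrderBounded A → AlmostLimitedSet A :=  by
  constructor
  · -- property (d) implies every almost order bounded set is almost limited
    intro hd A hA
    have hbd : Bornology.IsBounded A := by
      obtain ⟨u, hu, hsub⟩ := hA 1 one_pos
      have h1 : Bornology.IsBounded (Set.Icc (-u) u) := by
        apply (Metric.isBounded_closedBall (x := (0 : E)) (r := ‖u‖)).subset
        intro y hy
        simp only [Metric.mem_closedBall, dist_zero_right]
        exact HasSolidNorm.solid
          ((aux_abs_le_of_mem_Icc hy.1 hy.2).trans_eq (abs_of_nonneg hu).symm)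
      exact (h1.add (Metric.isBounded_closedBall)).subset hsub
    refine ⟨hbd, ?_⟩
    intro f hdisj hwnull
    have hpt : ∀ x : E, ∃ C, ∀ i, ‖f i x‖ ≤ C := by
      intro x
      obtain ⟨C, hC⟩ := ((hwnull x).norm).bddAbove_range
      exact ⟨C, fun i => hC (Set.mem_range_self i)⟩
    obtain ⟨C, hC⟩ := banach_steinhaus hpt
    have hC0 : 0 ≤ C := (norm_nonneg (f 0)).trans (hC 0)
    rw [Metric.tendstoUniformlyOn_iff]
    intro ε hε
    set δ := ε / (2 * (C + 1)) with hδdef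
    have hδ : 0 < δ := by positivity
    obtain ⟨u, hu, hsub⟩ := hA δ hδ
    have habs := hd f hdisj hwnull u hu
    have hev : ∀ᶠ n in atTop, absFunctional (f n) u < ε / 2 :=
      habs.eventually (gt_mem_nhds (show (0 : ℝ) < ε / 2 by linarith))
    filter_upwards [hev] with n hn x hxA
    obtain ⟨y, hy, z, hz, rfl⟩ := hsub hxA
    have h1 : |f n y| ≤ absFunctional (f n) u :=
      aux_abs_apply_le (f n) (aux_abs_le_of_mem_Icc hy.1 hy.2)
    have h2 : |f n z| ≤ C * δ := by
      calc |f n z| = ‖f n z‖ := rfl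
        _ ≤ ‖f n‖ * ‖z‖ := (f n).le_opNorm z
        _ ≤ C * δ :=
            mul_le_mul (hC n) (mem_closedBall_zero_iff.mp hz) (norm_nonneg z) hC0
    have hCδ : C * δ < ε / 2 := by
      have hlt : C * δ < (C + 1) * δ :=
        mul_lt_mul_of_pos_right (lt_add_one C) hδ
      have heq : (C + 1) * δ = ε / 2 := by
        rw [hδdef]
        field_simp
      linarith
    rw [Real.dist_eq]
    calc |0 - f n (y + z)| = |f n y + f n z| := by rw [map_add]; rw [zero_sub, abs_neg]
      _ ≤ |f n y| + |f n z| := abs_add_le _ _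
      _ < ε / 2 + ε / 2 := add_lt_add (h1.trans_lt hn) (h2.trans_lt hCδ)
      _ = ε := by ring
  · -- converse
    intro h f hdisj hwnull x hx
    have hA : AlmostOrderBounded (Set.Icc (-x) x) := by
      intro ε hε
      refine ⟨x, hx, fun y hy => ?_⟩
      exact Set.mem_add.mpr ⟨y, hy, 0, Metric.mem_closedBall_self hε.le, add_zero y⟩
    have hunif := (h _ hA).2 f hdisj hwnull
    rw [Metric.tendstoUniformlyOn_iff] at hunif
    rw [Metric.tendsto_atTop]
    intro ε hε
    have h2 := hunif (ε / 2) (by linarith)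
    rw [eventually_atTop] at h2
    obtain ⟨N, hN⟩ := h2
    refine ⟨N, fun n hn => ?_⟩
    have hle : absFunctional (f n) x ≤ ε / 2 := by
      apply Real.sSup_le _ (by linarith)
      rintro v ⟨u, hu, rfl⟩
      have humem : u ∈ Set.Icc (-x) x := by
        obtain ⟨ha, hb⟩ := aux_mem_Icc_of_abs_le hu
        exact ⟨ha, hb⟩
      have := hN n hn u humem
      rw [Real.dist_eq, zero_sub, abs_neg] at this
      exact (le_abs_self _).trans this.le
    have hnn : 0 ≤ absFunctional (f n) x := by
      have h0 : (0 : ℝ) ∈ (fun u => f n u) '' {u : E | |u| ≤ x} :=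
        ⟨0, by simpa using hx, by simp⟩
      exact le_csSup (aux_bddAbove (f n) x hx) h0
    rw [Real.dist_eq, sub_zero, abs_of_nonneg hnn]
    linarith
end
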